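/- If A and B are G-equidecomposable sets and B is G-paradoxical, then A is G-paradoxical. -/

import Mathlib

open scoped Pointwise

/-- `A` and `B` are `G`-equidecomposable: there are finite partitions
`A = A₁ ∪ … ∪ Aₙ` and `B = B₁ ∪ … ∪ Bₙ` into pairwise disjoint pieces and
`g₁, …, gₙ ∈ G` with `Bᵢ = gᵢ • Aᵢ`. -/
def EquidecompFin (G : Type*) {X : Type*} [Group G] [MulAction G X] (A B : Set X) : Prop :=
  ∃ (n : ℕ) (P : Fin n → Set X) (g : Fin n → G),
    Pairwise (Function.onFun Disjoint P) ∧ (⋃ i, P i) = A ∧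
    Pairwise (Function.onFun Disjoint fun i => g i • P i) ∧ (⋃ i, g i • P i) = B

/-- `E` is `G`-paradoxical: `E` is nonempty and splits into two disjoint pieces,
each `G`-equidecomposable with `E`. -/
def Paradoxical (G : Type*) {X : Type*} [Group G] [MulAction G X] (E : Set X) : Prop :=
  E.Nonempty ∧ ∃ A B : Set X, A ∪ B = E ∧ Disjoint A B ∧
    EquidecompFin G A E ∧ EquidecompFin G B E

section Aux

variable {G X : Type*} [Group G] [MulAction G X]

/-- Equidecomposability from a partition indexed by an arbitrary finite type. -/
lemma equidecomp_of_fintype {ι : Type*} [Fintype ι] {A B : Set X}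
    (P : ι → Set X) (g : ι → G)
    (h1 : Pairwise (Function.onFun Disjoint P)) (h2 : (⋃ i, P i) = A)
    (h3 : Pairwise (Function.onFun Disjoint fun i => g i • P i))
    (h4 : (⋃ i, g i • P i) = B) : EquidecompFin G A B := by
  classical
  obtain ⟨e⟩ := Fintype.truncEquivFin ι
  refine ⟨Fintype.card ι, P ∘ e.symm, g ∘ e.symm, ?_, ?_, ?_, ?_⟩
  · exact h1.comp_of_injective e.symm.injective
  · rw [← h2]; exact e.symm.surjective.iUnion_comp P
  · exact h3.comp_of_injective e.symm.injective
  · rw [← h4]; exact e.symm.surjective.iUnion_comp fun i => g i • P i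

lemma EquidecompFin.symm {A B : Set X} (h : EquidecompFin G A B) : EquidecompFin G B A := by
  obtain ⟨n, P, g, h1, h2, h3, h4⟩ := h
  refine ⟨n, fun i => g i • P i, fun i => (g i)⁻¹, h3, h4, ?_, ?_⟩
  · simpa only [inv_smul_smul] using h1
  · simpa only [inv_smul_smul] using h2

lemma EquidecompFin.trans {A B C : Set X} (hAB : EquidecompFin G A B) (hBC : EquidecompFin G B C) :
    EquidecompFin G A C := by
  obtain ⟨n, P, g, hP, hPA, hgP, hgPB⟩ := hAB
  obtain ⟨m, Q, k, hQ, hQB, hkQ, hkQC⟩ := hBC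
  refine equidecomp_of_fintype (ι := Fin n × Fin m)
    (fun p => P p.1 ∩ (g p.1)⁻¹ • Q p.2) (fun p => k p.2 * g p.1) ?_ ?_ ?_ ?_
  · rintro ⟨i, j⟩ ⟨i', j'⟩ hne
    rcases eq_or_ne i i' with rfl | hii
    · have hjj : j ≠ j' := fun hj => hne (by rw [hj])
      exact Set.disjoint_of_subset Set.inter_subset_right Set.inter_subset_right
        (Set.disjoint_smul_set.2 (hQ hjj))
    · exact Set.disjoint_of_subset Set.inter_subset_left Set.inter_subset_left (hP hii)
  · rw [← hPA]
    rw [Set.iUnion_prod']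
    refine Set.iUnion_congr fun i => ?_
    show (⋃ j, P i ∩ (g i)⁻¹ • Q j) = P i
    rw [← Set.inter_iUnion, ← Set.smul_set_iUnion, hQB]
    have : P i ⊆ (g i)⁻¹ • B := by
      rw [Set.subset_smul_set_iff, inv_inv, ← hgPB]
      exact Set.subset_iUnion (fun i => g i • P i) i
    exact Set.inter_eq_self_of_subset_left this
  · rintro ⟨i, j⟩ ⟨i', j'⟩ hne
    simp only [Function.onFun, mul_smul, Set.smul_set_inter, smul_inv_smul]
    rcases eq_or_ne j j' with rfl | hjj
    · have hii : i ≠ i' := fun hi => hne (by rw [hi])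
      exact Set.disjoint_of_subset Set.inter_subset_left Set.inter_subset_left
        ((Set.disjoint_smul_set (a := k j)).2 (hgP hii))
    · exact Set.disjoint_of_subset Set.inter_subset_right Set.inter_subset_right (hkQ hjj)
  · rw [← hkQC]
    have : ∀ p : Fin n × Fin m, (k p.2 * g p.1) • (P p.1 ∩ (g p.1)⁻¹ • Q p.2)
        = k p.2 • (g p.1 • P p.1 ∩ Q p.2) := by
      intro p
      rw [mul_smul, Set.smul_set_inter, smul_inv_smul]
    simp only [this]
    rw [Set.iUnion_prod', Set.iUnion_comm]
    refine Set.iUnion_congr fun j => ?_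
    show (⋃ i, k j • (g i • P i ∩ Q j)) = k j • Q j
    rw [← Set.smul_set_iUnion, ← Set.iUnion_inter, hgPB]
    congr 1
    have : Q j ⊆ B := hQB ▸ Set.subset_iUnion Q j
    exact Set.inter_eq_self_of_subset_right this

/-- A disjoint splitting of `A` transports along an equidecomposition to a
disjoint splitting of `B` with equidecomposable pieces. -/
lemma EquidecompFin.split {A B S₁ S₂ : Set X} (h : EquidecompFin G A B)
    (hS : S₁ ∪ S₂ = A) (hdis : Disjoint S₁ S₂) :
    ∃ T₁ T₂ : Set X, T₁ ∪ T₂ = B ∧ Disjoint T₁ T₂ ∧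
      EquidecompFin G S₁ T₁ ∧ EquidecompFin G S₂ T₂ := by
  obtain ⟨n, P, g, hP, hPA, hgP, hgPB⟩ := h
  refine ⟨⋃ i, g i • (P i ∩ S₁), ⋃ i, g i • (P i ∩ S₂), ?_, ?_, ?_, ?_⟩
  · rw [← Set.iUnion_union_distrib]
    rw [← hgPB]
    refine Set.iUnion_congr fun i => ?_
    rw [← Set.smul_set_union, ← Set.inter_union_distrib_left, hS]
    congr 1
    exact Set.inter_eq_self_of_subset_left (hPA ▸ Set.subset_iUnion P i)
  · rw [Set.disjoint_iUnion_left]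
    intro i
    rw [Set.disjoint_iUnion_right]
    intro j
    rcases eq_or_ne i j with rfl | hij
    · rw [Set.disjoint_smul_set]
      exact Disjoint.mono Set.inter_subset_right Set.inter_subset_right hdis
    · exact Set.disjoint_of_subset (Set.smul_set_mono Set.inter_subset_left)
        (Set.smul_set_mono Set.inter_subset_left) (hgP hij)
  all_goals {
    first
    | (refine ⟨n, fun i => P i ∩ S₁, g, ?_, ?_, ?_, rfl⟩)
    | (refine ⟨n, fun i => P i ∩ S₂, g, ?_, ?_, ?_, rfl⟩)
    · exact fun i j hij =>
        Set.disjoint_of_subset Set.inter_subset_left Set.inter_subset_left (hP hij)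
    · rw [← Set.iUnion_inter, hPA]
      exact Set.inter_eq_self_of_subset_right (by rw [← hS]; first | exact Set.subset_union_left | exact Set.subset_union_right)
    · exact fun i j hij => Set.disjoint_of_subset (Set.smul_set_mono Set.inter_subset_left)
        (Set.smul_set_mono Set.inter_subset_left) (hgP hij)
  }

end Aux

/-- Paradoxicality is inherited between equidecomposable sets: if `A ∼ B` and `B` is
`G`-paradoxical, then `A` is `G`-paradoxical. -/
theorem paradoxical_of_equidecomp {G X : Type*} [Group G] [MulAction G X] {A B : Set X}
    (h : EquidecompFin G A B) (hB : Paradoxical G B) : Paradoxical G A := by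
  obtain ⟨hne, B₁, B₂, hunion, hdis, h₁, h₂⟩ := hB
  obtain ⟨A₁, A₂, hAunion, hAdis, e₁, e₂⟩ := h.symm.split hunion hdis
  refine ⟨?_, A₁, A₂, hAunion, hAdis, ?_, ?_⟩
  · obtain ⟨x, hx⟩ := hne
    obtain ⟨n, P, g, -, hPA, -, hgPB⟩ := h
    rw [← hgPB] at hx
    obtain ⟨i, y, hy, -⟩ := by simpa using hx
    exact ⟨y, hPA ▸ Set.mem_iUnion.2 ⟨i, hy⟩⟩
  · exact (e₁.symm.trans h₁).trans h.symm
  · exact (e₂.symm.trans h₂).trans h.symm
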